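/- Let R be the 2×2 rotation matrix with rows (−1/2, √3/2) and (−√3/2, −1/2), and let τ = e^{2πi/3}. Let Ω ⊆ ℝ² be a measurable set with R·Ω = Ω and −Ω = Ω, and let Φ₁, Φ₂ : ℝ² → ℂ be measurable with ∫_Ω |Φ₁|⁴ < ∞ and ∫_Ω |Φ₂|⁴ < ∞, satisfying Φ₁(Rᵀx) = τ Φ₁(x), Φ₂(Rᵀx) = τ̄ Φ₂(x) and Φ₂(x) = conj(Φ₁(−x)) for almost every x ∈ ℝ². Set β₁ := ∫_Ω |Φ₁(x)|⁴ dx and β₂ := ∫_Ω |Φ₁(x)|² |Φ₂(x)|² dx. Then for all ψ₁, ψ₂ ∈ ℂ, writing U₀ := ψ₁Φ₁ + ψ₂Φ₂, one has ∫_Ω conj(Φ₁) |U₀|² U₀ dx = (β₁|ψ₁|² + 2β₂|ψ₂|²) ψ₁ and ∫_Ω conj(Φ₂) |U₀|² U₀ dx = (2β₂|ψ₁|² + β₁|ψ₂|²) ψ₂. -/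

import Mathlib

open MeasureTheory

/-- The map `x ↦ Rᵀx` on ℝ², where `R` is the rotation by `2π/3` with rows
`(−1/2, √3/2)` and `(−√3/2, −1/2)`; so `Rᵀ` has rows `(−1/2, −√3/2)`, `(√3/2, −1/2)`. -/
noncomputable def rotT (x : EuclideanSpace ℝ (Fin 2)) : EuclideanSpace ℝ (Fin 2) :=
  (WithLp.equiv 2 (Fin 2 → ℝ)).symm
    ![-(1 / 2) * x 0 - (Real.sqrt 3 / 2) * x 1, (Real.sqrt 3 / 2) * x 0 - (1 / 2) * x 1]

/-- The map `x ↦ Rx` on ℝ², where `R` has rows `(−1/2, √3/2)` and `(−√3/2, −1/2)`. -/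
noncomputable def rotR (x : EuclideanSpace ℝ (Fin 2)) : EuclideanSpace ℝ (Fin 2)  :=
  (WithLp.equiv 2 (Fin 2 → ℝ)).symm
    ![-(1 / 2) * x 0 + (Real.sqrt 3 / 2) * x 1, -(Real.sqrt 3 / 2) * x 0 - (1 / 2) * x 1]

lemma rotT_apply0 (x : EuclideanSpace ℝ (Fin 2)) :
    rotT x 0 = -(1 / 2) * x 0 - (Real.sqrt 3 / 2) * x 1 := rfl
lemma rotT_apply1 (x : EuclideanSpace ℝ (Fin 2)) :
    rotT x 1 = (Real.sqrt 3 / 2) * x 0 - (1 / 2) * x 1 := rfl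
lemma rotR_apply0 (x : EuclideanSpace ℝ (Fin 2)) :
    rotR x 0 = -(1 / 2) * x 0 + (Real.sqrt 3 / 2) * x 1 := rfl
lemma rotR_apply1 (x : EuclideanSpace ℝ (Fin 2)) :
    rotR x 1 = -(Real.sqrt 3 / 2) * x 0 - (1 / 2) * x 1 := rfl

lemma sqrt3_sq : Real.sqrt 3 ^ 2 = 3 := Real.sq_sqrt (by norm_num)

lemma euclid_ext {x y : EuclideanSpace ℝ (Fin 2)} (h0 : x 0 = y 0) (h1 : x 1 = y 1) : x = y := by
  ext i
  fin_cases i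
  · exact h0
  · exact h1

lemma rotR_rotT (x : EuclideanSpace ℝ (Fin 2)) : rotR (rotT x) = x := by
  refine euclid_ext ?_ ?_
  · rw [rotR_apply0, rotT_apply0, rotT_apply1]
    linear_combination (x 0 / 4) * sqrt3_sq
  · rw [rotR_apply1, rotT_apply0, rotT_apply1]
    linear_combination (x 1 / 4) * sqrt3_sq

lemma rotT_rotR (x : EuclideanSpace ℝ (Fin 2)) : rotT (rotR x) = x := by
  refine euclid_ext ?_ ?_
  · rw [rotT_apply0, rotR_apply0, rotR_apply1]
    linear_combination (x 0 / 4) * sqrt3_sq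
  · rw [rotT_apply1, rotR_apply0, rotR_apply1]
    linear_combination (x 1 / 4) * sqrt3_sq

lemma add_apply2 (x y : EuclideanSpace ℝ (Fin 2)) (i : Fin 2) : (x + y) i = x i + y i := rfl
lemma smul_apply2 (c : ℝ) (x : EuclideanSpace ℝ (Fin 2)) (i : Fin 2) : (c • x) i = c * x i := rfl

noncomputable def rotLIE : EuclideanSpace ℝ (Fin 2) ≃ₗᵢ[ℝ] EuclideanSpace ℝ (Fin 2) where
  toFun := rotT
  invFun := rotR
  map_add' x y := by
    refine euclid_ext ?_ ?_ <;>
      simp only [rotT_apply0, rotT_apply1, add_apply2] <;> ring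
  map_smul' c x := by
    refine euclid_ext ?_ ?_ <;>
      simp only [rotT_apply0, rotT_apply1, smul_apply2, RingHom.id_apply] <;> ring
  left_inv := rotR_rotT
  right_inv := rotT_rotR
  norm_map' x := by
    change ‖rotT x‖ = ‖x‖
    rw [EuclideanSpace.norm_eq, EuclideanSpace.norm_eq]
    congr 1
    rw [Fin.sum_univ_two, Fin.sum_univ_two]
    simp only [Real.norm_eq_abs, sq_abs, rotT_apply0, rotT_apply1]
    linear_combination ((x 0 ^ 2 + x 1 ^ 2) / 4) * sqrt3_sq

lemma rotT_measurePreserving : MeasurePreserving rotT (volume) (volume) :=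
  rotLIE.measurePreserving

lemma rotT_measurableEmbedding : MeasurableEmbedding rotT :=
  rotLIE.toMeasurableEquiv.measurableEmbedding

lemma rotT_preimage (Ω : Set (EuclideanSpace ℝ (Fin 2))) (hΩrot : rotR '' Ω = Ω) :
    rotT ⁻¹' Ω = Ω := by
  ext x
  constructor
  · intro hx
    have : rotR (rotT x) ∈ rotR '' Ω := ⟨_, hx, rfl⟩
    rwa [rotR_rotT, hΩrot] at this
  · intro hx
    rw [← hΩrot] at hx
    obtain ⟨y, hy, rfl⟩ := hx
    simpa [rotT_rotR] using hy

lemma vanish_integral (Ω : Set (EuclideanSpace ℝ (Fin 2))) (hΩ : MeasurableSet Ω)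
    (hΩrot : rotR '' Ω = Ω) (f : EuclideanSpace ℝ (Fin 2) → ℂ)
    (hint : IntegrableOn f Ω volume) (c : ℂ) (hc : c ≠ 1)
    (hcov : ∀ᵐ x ∂(volume : Measure (EuclideanSpace ℝ (Fin 2))), f (rotT x) = c * f x) :
    ∫ x in Ω, f x = 0 := by
  have h1 : ∫ x in Ω, f (rotT x) = ∫ x in Ω, f x := by
    conv_lhs => rw [← rotT_preimage Ω hΩrot]
    exact rotT_measurePreserving.setIntegral_preimage_emb rotT_measurableEmbedding f Ω
  have h2 : ∫ x in Ω, f (rotT x) = ∫ x in Ω, c * f x :=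
    setIntegral_congr_ae hΩ (hcov.mono fun x hx _ => hx)
  rw [integral_const_mul] at h2
  have h3 : (c - 1) * ∫ x in Ω, f x = 0 := by
    linear_combination h1 - h2
  rcases mul_eq_zero.mp h3 with h | h
  · exact absurd (sub_eq_zero.mp h) hc
  · exact h

noncomputable def τ : ℂ := Complex.exp (2 * Real.pi * Complex.I / 3)

lemma tau_cube : τ ^ 3 = 1 := by
  rw [τ, ← Complex.exp_nat_mul]
  have : (3 : ℕ) * (2 * (Real.pi : ℂ) * Complex.I / 3) = 2 * Real.pi * Complex.I := by
    push_cast; ring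
  rw [this, Complex.exp_two_pi_mul_I]

lemma two_pi_I_ne_zero : (2 : ℂ) * Real.pi * Complex.I ≠ 0 := by
  simp [Real.pi_ne_zero, Complex.I_ne_zero]

lemma tau_ne_one : τ ≠ 1 := by
  intro h
  rw [τ, Complex.exp_eq_one_iff] at h
  obtain ⟨n, hn⟩ := h
  have h2 : ((3 * n - 1 : ℤ) : ℂ) * (2 * Real.pi * Complex.I) = 0 := by
    push_cast
    linear_combination -3 * hn
  have h3 : ((3 * n - 1 : ℤ) : ℂ) = 0 := by
    rcases mul_eq_zero.mp h2 with h | h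
    · exact h
    · exact absurd h two_pi_I_ne_zero
  have : (3 * n - 1 : ℤ) = 0 := by exact_mod_cast h3
  omega

lemma tau_sq_ne_one : τ ^ 2 ≠ 1 := by
  intro h
  rw [τ, ← Complex.exp_nat_mul, Complex.exp_eq_one_iff] at h
  obtain ⟨n, hn⟩ := h
  have h2 : ((3 * n - 2 : ℤ) : ℂ) * (2 * Real.pi * Complex.I) = 0 := by
    push_cast at hn ⊢
    linear_combination -3 * hn
  have h3 : ((3 * n - 2 : ℤ) : ℂ) = 0 := by
    rcases mul_eq_zero.mp h2 with h | h
    · exact h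
    · exact absurd h two_pi_I_ne_zero
  have : (3 * n - 2 : ℤ) = 0 := by exact_mod_cast h3
  omega

lemma tau_mul_conj : τ * (starRingEnd ℂ) τ = 1 := by
  rw [Complex.mul_conj]
  norm_cast
  rw [← Complex.sq_norm]
  have : (2 * (Real.pi : ℂ) * Complex.I / 3) = ((2 * Real.pi / 3 : ℝ) : ℂ) * Complex.I := by
    push_cast; ring
  rw [τ, this, Complex.norm_exp_ofReal_mul_I]
  norm_num

lemma conj_tau : (starRingEnd ℂ) τ = τ ^ 2 := by
  linear_combination τ ^ 2 * tau_mul_conj - (starRingEnd ℂ) τ * tau_cube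

/-- for `Ω ⊆ ℝ²` invariant under the rotation `R` and under `x ↦ −x`, and Bloch
modes `Φ₁, Φ₂ ∈ L⁴(Ω)` satisfying `Φ₁(Rᵀx) = τΦ₁(x)`, `Φ₂(Rᵀx) = τ̄Φ₂(x)` (with
`τ = e^{2πi/3}`) and `Φ₂(x) = conj(Φ₁(−x))` a.e., setting `β₁ := ∫_Ω |Φ₁|⁴` and
`β₂ := ∫_Ω |Φ₁|²|Φ₂|²`, for all `ψ₁, ψ₂ ∈ ℂ` and `U₀ := ψ₁Φ₁ + ψ₂Φ₂` one has
`∫_Ω conj(Φ₁)|U₀|²U₀ = (β₁|ψ₁|² + 2β₂|ψ₂|²)ψ₁` and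
`∫_Ω conj(Φ₂)|U₀|²U₀ = (2β₂|ψ₁|² + β₁|ψ₂|²)ψ₂`. -/
theorem effective_cubic_nonlinearity
    (Ω : Set (EuclideanSpace ℝ (Fin 2))) (hΩ : MeasurableSet Ω)
    (hΩrot : rotR '' Ω = Ω)
    (hΩsymm : (fun x : EuclideanSpace ℝ (Fin 2) => -x) '' Ω = Ω)
    (Φ₁ Φ₂ : EuclideanSpace ℝ (Fin 2) → ℂ)
    (hΦ₁ : Measurable Φ₁) (hΦ₂ : Measurable Φ₂)
    (hΦ₁L4 : IntegrableOn (fun x => ‖Φ₁ x‖ ^ 4) Ω volume)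
    (hΦ₂L4 : IntegrableOn (fun x => ‖Φ₂ x‖ ^ 4) Ω volume)
    (hrot₁ : ∀ᵐ x ∂(volume : Measure (EuclideanSpace ℝ (Fin 2))),
      Φ₁ (rotT x) = Complex.exp (2 * Real.pi * Complex.I / 3) * Φ₁ x)
    (hrot₂ : ∀ᵐ x ∂(volume : Measure (EuclideanSpace ℝ (Fin 2))),
      Φ₂ (rotT x) = (starRingEnd ℂ) (Complex.exp (2 * Real.pi * Complex.I / 3)) * Φ₂ x)
    (hparity : ∀ᵐ x ∂(volume : Measure (EuclideanSpace ℝ (Fin 2))),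
      Φ₂ x = (starRingEnd ℂ) (Φ₁ (-x)))
    (β₁ β₂ : ℝ)
    (hβ₁ : β₁ = ∫ x in Ω, ‖Φ₁ x‖ ^ 4)
    (hβ₂ : β₂ = ∫ x in Ω, ‖Φ₁ x‖ ^ 2 * ‖Φ₂ x‖ ^ 2) :
    ∀ ψ₁ ψ₂ : ℂ, ∀ U₀ : EuclideanSpace ℝ (Fin 2) → ℂ,
      U₀ = (fun x => ψ₁ * Φ₁ x + ψ₂ * Φ₂ x) →
      (∫ x in Ω, (starRingEnd ℂ) (Φ₁ x) * (‖U₀ x‖ ^ 2 : ℝ) * U₀ x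
          = ((β₁ * ‖ψ₁‖ ^ 2 + 2 * β₂ * ‖ψ₂‖ ^ 2 : ℝ) : ℂ) * ψ₁) ∧
      (∫ x in Ω, (starRingEnd ℂ) (Φ₂ x) * (‖U₀ x‖ ^ 2 : ℝ) * U₀ x
          = ((2 * β₂ * ‖ψ₁‖ ^ 2 + β₁ * ‖ψ₂‖ ^ 2 : ℝ) : ℂ) * ψ₂) := by
  intro ψ₁ ψ₂ U₀ hU₀
  subst hU₀
  -- rotation eigen-relations in terms of τ
  have hra : ∀ᵐ x ∂(volume : Measure (EuclideanSpace ℝ (Fin 2))),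
      Φ₁ (rotT x) = τ * Φ₁ x := hrot₁
  have hrb : ∀ᵐ x ∂(volume : Measure (EuclideanSpace ℝ (Fin 2))),
      Φ₂ (rotT x) = τ ^ 2 * Φ₂ x := by
    filter_upwards [hrot₂] with x h
    rw [h]; rw [show (starRingEnd ℂ) (Complex.exp (2 * Real.pi * Complex.I / 3))
      = (starRingEnd ℂ) τ from rfl, conj_tau]
  have hrA : ∀ᵐ x ∂(volume : Measure (EuclideanSpace ℝ (Fin 2))),
      (starRingEnd ℂ) (Φ₁ (rotT x)) = τ ^ 2 * (starRingEnd ℂ) (Φ₁ x) := by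
    filter_upwards [hra] with x h
    rw [h, map_mul, conj_tau]
  have hrB : ∀ᵐ x ∂(volume : Measure (EuclideanSpace ℝ (Fin 2))),
      (starRingEnd ℂ) (Φ₂ (rotT x)) = τ * (starRingEnd ℂ) (Φ₂ x) := by
    filter_upwards [hrot₂] with x h
    rw [h, map_mul, Complex.conj_conj]
    rfl
  -- integrability of quartic monomials
  have aux : ∀ u v : ℝ, 0 ≤ u → 0 ≤ v → ∀ m n : ℕ, m + n = 4 →
      u ^ m * v ^ n ≤ u ^ 4 + v ^ 4 := by
    intro u v hu hv m n hmn
    rcases le_total u v with h | h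
    · calc u ^ m * v ^ n ≤ v ^ m * v ^ n := by gcongr
        _ = v ^ 4 := by rw [← pow_add, hmn]
        _ ≤ u ^ 4 + v ^ 4 := le_add_of_nonneg_left (by positivity)
    · calc u ^ m * v ^ n ≤ u ^ m * u ^ n := by gcongr
        _ = u ^ 4 := by rw [← pow_add, hmn]
        _ ≤ u ^ 4 + v ^ 4 := le_add_of_nonneg_right (by positivity)
  have hg : IntegrableOn (fun x => ‖Φ₁ x‖ ^ 4 + ‖Φ₂ x‖ ^ 4) Ω volume :=
    hΦ₁L4.add hΦ₂L4
  have key : ∀ i j k l : ℕ, i + j + k + l = 4 →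
      IntegrableOn (fun x => Φ₁ x ^ i * Φ₂ x ^ j * (starRingEnd ℂ) (Φ₁ x) ^ k *
        (starRingEnd ℂ) (Φ₂ x) ^ l) Ω volume := by
    intro i j k l hijkl
    refine Integrable.mono' hg ?_ ?_
    · have hc1 : Measurable fun x => (starRingEnd ℂ) (Φ₁ x) :=
        Complex.continuous_conj.measurable.comp hΦ₁
      have hc2 : Measurable fun x => (starRingEnd ℂ) (Φ₂ x) :=
        Complex.continuous_conj.measurable.comp hΦ₂
      exact ((((hΦ₁.pow_const i).mul (hΦ₂.pow_const j)).mul (hc1.pow_const k)).mul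
        (hc2.pow_const l)).aestronglyMeasurable
    · refine Filter.Eventually.of_forall fun x => ?_
      have hnorm : ‖Φ₁ x ^ i * Φ₂ x ^ j * (starRingEnd ℂ) (Φ₁ x) ^ k *
          (starRingEnd ℂ) (Φ₂ x) ^ l‖
          = ‖Φ₁ x‖ ^ (i + k) * ‖Φ₂ x‖ ^ (j + l) := by
        simp only [norm_mul, norm_pow, Complex.norm_conj, pow_add]
        ring
      rw [hnorm]
      exact aux _ _ (norm_nonneg _) (norm_nonneg _) _ _ (by omega)
  -- the six vanishing integrals
  have hV1 : ∫ x in Ω, Φ₁ x ^ 2 * (starRingEnd ℂ) (Φ₁ x) * (starRingEnd ℂ) (Φ₂ x) = 0 := by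
    refine vanish_integral Ω hΩ hΩrot _ ?_ (τ ^ 2) tau_sq_ne_one ?_
    · simpa using key 2 0 1 1 (by norm_num)
    · filter_upwards [hra, hrA, hrB] with x h1 h3 h4
      rw [h3, h4, h1]
      linear_combination (τ ^ 2 * Φ₁ x ^ 2 * (starRingEnd ℂ) (Φ₁ x) *
        (starRingEnd ℂ) (Φ₂ x)) * tau_cube
  have hV2 : ∫ x in Ω, Φ₁ x * Φ₂ x * (starRingEnd ℂ) (Φ₁ x) ^ 2 = 0 := by
    refine vanish_integral Ω hΩ hΩrot _ ?_ τ tau_ne_one ?_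
    · simpa using key 1 1 2 0 (by norm_num)
    · filter_upwards [hra, hrb, hrA] with x h1 h2 h3
      rw [h3, h1, h2]
      linear_combination (Φ₁ x * Φ₂ x * (starRingEnd ℂ) (Φ₁ x) ^ 2 * τ * (τ ^ 3 + 1)) * tau_cube
  have hV3 : ∫ x in Ω, Φ₂ x ^ 2 * (starRingEnd ℂ) (Φ₁ x) ^ 2 = 0 := by
    refine vanish_integral Ω hΩ hΩrot _ ?_ (τ ^ 2) tau_sq_ne_one ?_
    · simpa using key 0 2 2 0 (by norm_num)
    · filter_upwards [hrb, hrA] with x h2 h3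
      rw [h3, h2]
      linear_combination (Φ₂ x ^ 2 * (starRingEnd ℂ) (Φ₁ x) ^ 2 * τ ^ 2 * (τ ^ 3 + 1)) * tau_cube
  have hV4 : ∫ x in Ω, Φ₂ x ^ 2 * (starRingEnd ℂ) (Φ₁ x) * (starRingEnd ℂ) (Φ₂ x) = 0 := by
    refine vanish_integral Ω hΩ hΩrot _ ?_ τ tau_ne_one ?_
    · simpa using key 0 2 1 1 (by norm_num)
    · filter_upwards [hrb, hrA, hrB] with x h2 h3 h4
      rw [h3, h4, h2]
      linear_combination (Φ₂ x ^ 2 * (starRingEnd ℂ) (Φ₁ x) * (starRingEnd ℂ) (Φ₂ x) * τ *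
        (τ ^ 3 + 1)) * tau_cube
  have hV5 : ∫ x in Ω, Φ₁ x ^ 2 * (starRingEnd ℂ) (Φ₂ x) ^ 2 = 0 := by
    refine vanish_integral Ω hΩ hΩrot _ ?_ τ tau_ne_one ?_
    · simpa using key 2 0 0 2 (by norm_num)
    · filter_upwards [hra, hrB] with x h1 h4
      rw [h4, h1]
      linear_combination (Φ₁ x ^ 2 * (starRingEnd ℂ) (Φ₂ x) ^ 2 * τ) * tau_cube
  have hV6 : ∫ x in Ω, Φ₁ x * Φ₂ x * (starRingEnd ℂ) (Φ₂ x) ^ 2 = 0 := by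
    refine vanish_integral Ω hΩ hΩrot _ ?_ (τ ^ 2) tau_sq_ne_one ?_
    · simpa using key 1 1 0 2 (by norm_num)
    · filter_upwards [hra, hrb, hrB] with x h1 h2 h4
      rw [h4, h1, h2]
      linear_combination (Φ₁ x * Φ₂ x * (starRingEnd ℂ) (Φ₂ x) ^ 2 * τ ^ 2) * tau_cube
  -- pointwise algebraic identities
  have habs : ∀ z : ℂ, ((‖z‖ ^ 2 : ℝ) : ℂ) = z * (starRingEnd ℂ) z := by
    intro z
    rw [Complex.sq_norm]
    exact (Complex.mul_conj z).symm
  have habs' : ∀ z : ℂ, ((‖z‖ : ℝ) : ℂ) ^ 2 = z * (starRingEnd ℂ) z := by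
    intro z
    rw [← Complex.ofReal_pow]
    exact habs z
  have hpt4 : ∀ z : ℂ, z ^ 2 * (starRingEnd ℂ) z ^ 2 = ((‖z‖ ^ 4 : ℝ) : ℂ) := by
    intro z
    have h := habs z
    have h2 : ((‖z‖ ^ 4 : ℝ) : ℂ) = ((‖z‖ ^ 2 : ℝ) : ℂ) ^ 2 := by
      push_cast; ring
    rw [h2, h]; ring
  have hpt22 : ∀ z w : ℂ, z * w * (starRingEnd ℂ) z * (starRingEnd ℂ) w
      = ((‖z‖ ^ 2 * ‖w‖ ^ 2 : ℝ) : ℂ) := by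
    intro z w
    rw [Complex.ofReal_mul, habs z, habs w]; ring
  -- the nonvanishing integrals
  have hN1 : ∫ x in Ω, Φ₁ x ^ 2 * (starRingEnd ℂ) (Φ₁ x) ^ 2 = (β₁ : ℂ) := by
    calc ∫ x in Ω, Φ₁ x ^ 2 * (starRingEnd ℂ) (Φ₁ x) ^ 2
        = ∫ x in Ω, ((‖Φ₁ x‖ ^ 4 : ℝ) : ℂ) :=
          setIntegral_congr_ae hΩ (Filter.Eventually.of_forall fun x _ => hpt4 (Φ₁ x))
      _ = ((∫ x in Ω, ‖Φ₁ x‖ ^ 4 : ℝ) : ℂ) :=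
          integral_ofReal (f := fun x => ‖Φ₁ x‖ ^ 4)
      _ = (β₁ : ℂ) := by rw [hβ₁]
  have hN2 : ∫ x in Ω, Φ₁ x * Φ₂ x * (starRingEnd ℂ) (Φ₁ x) * (starRingEnd ℂ) (Φ₂ x)
      = (β₂ : ℂ) := by
    calc ∫ x in Ω, Φ₁ x * Φ₂ x * (starRingEnd ℂ) (Φ₁ x) * (starRingEnd ℂ) (Φ₂ x)
        = ∫ x in Ω, ((‖Φ₁ x‖ ^ 2 * ‖Φ₂ x‖ ^ 2 : ℝ) : ℂ) :=
          setIntegral_congr_ae hΩ (Filter.Eventually.of_forall fun x _ => hpt22 (Φ₁ x) (Φ₂ x))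
      _ = ((∫ x in Ω, ‖Φ₁ x‖ ^ 2 * ‖Φ₂ x‖ ^ 2 : ℝ) : ℂ) :=
          integral_ofReal (f := fun x => ‖Φ₁ x‖ ^ 2 * ‖Φ₂ x‖ ^ 2)
      _ = (β₂ : ℂ) := by rw [hβ₂]
  -- parity gives ∫ |Φ₂|⁴ = β₁
  have hnegpre : (Neg.neg : EuclideanSpace ℝ (Fin 2) → EuclideanSpace ℝ (Fin 2)) ⁻¹' Ω = Ω := by
    ext x
    constructor
    · intro hx
      rw [← hΩsymm]
      exact ⟨-x, hx, by simp⟩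
    · intro hx
      show -x ∈ Ω
      rw [← hΩsymm]
      exact ⟨x, hx, rfl⟩
  have hN3r : ∫ x in Ω, ‖Φ₂ x‖ ^ 4 = β₁ := by
    have step1 : ∫ x in Ω, ‖Φ₂ x‖ ^ 4 = ∫ x in Ω, ‖Φ₁ (-x)‖ ^ 4 :=
      setIntegral_congr_ae hΩ (hparity.mono fun x h _ => by rw [h, Complex.norm_conj])
    have step2 : ∫ x in Ω, ‖Φ₁ (-x)‖ ^ 4 = ∫ x in Ω, ‖Φ₁ x‖ ^ 4 := by
      conv_lhs => rw [← hnegpre]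
      exact (Measure.measurePreserving_neg volume).setIntegral_preimage_emb
        (Homeomorph.neg (EuclideanSpace ℝ (Fin 2))).measurableEmbedding
        (fun y => ‖Φ₁ y‖ ^ 4) Ω
    rw [step1, step2, hβ₁]
  have hN3 : ∫ x in Ω, Φ₂ x ^ 2 * (starRingEnd ℂ) (Φ₂ x) ^ 2 = (β₁ : ℂ) := by
    calc ∫ x in Ω, Φ₂ x ^ 2 * (starRingEnd ℂ) (Φ₂ x) ^ 2
        = ∫ x in Ω, ((‖Φ₂ x‖ ^ 4 : ℝ) : ℂ) :=
          setIntegral_congr_ae hΩ (Filter.Eventually.of_forall fun x _ => hpt4 (Φ₂ x))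
      _ = ((∫ x in Ω, ‖Φ₂ x‖ ^ 4 : ℝ) : ℂ) :=
          integral_ofReal (f := fun x => ‖Φ₂ x‖ ^ 4)
      _ = (β₁ : ℂ) := by rw [hN3r]
  have int1 : IntegrableOn (fun x => Φ₁ x ^ 2 * (starRingEnd ℂ) (Φ₁ x) ^ 2) Ω volume := by
    simpa using key 2 0 2 0 (by norm_num)
  have int2 : IntegrableOn (fun x => Φ₁ x ^ 2 * (starRingEnd ℂ) (Φ₁ x) * (starRingEnd ℂ) (Φ₂ x))
      Ω volume := by simpa using key 2 0 1 1 (by norm_num)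
  have int3 : IntegrableOn (fun x => Φ₁ x * Φ₂ x * (starRingEnd ℂ) (Φ₁ x) ^ 2) Ω volume := by
    simpa using key 1 1 2 0 (by norm_num)
  have int4 : IntegrableOn (fun x => Φ₁ x * Φ₂ x * (starRingEnd ℂ) (Φ₁ x) *
      (starRingEnd ℂ) (Φ₂ x)) Ω volume := by simpa using key 1 1 1 1 (by norm_num)
  have int5 : IntegrableOn (fun x => Φ₂ x ^ 2 * (starRingEnd ℂ) (Φ₁ x) ^ 2) Ω volume := by
    simpa using key 0 2 2 0 (by norm_num)
  have int6 : IntegrableOn (fun x => Φ₂ x ^ 2 * (starRingEnd ℂ) (Φ₁ x) * (starRingEnd ℂ) (Φ₂ x))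
      Ω volume := by simpa using key 0 2 1 1 (by norm_num)
  have int7 : IntegrableOn (fun x => Φ₁ x ^ 2 * (starRingEnd ℂ) (Φ₂ x) ^ 2) Ω volume := by
    simpa using key 2 0 0 2 (by norm_num)
  have int8 : IntegrableOn (fun x => Φ₁ x * Φ₂ x * (starRingEnd ℂ) (Φ₂ x) ^ 2) Ω volume := by
    simpa using key 1 1 0 2 (by norm_num)
  have int9 : IntegrableOn (fun x => Φ₂ x ^ 2 * (starRingEnd ℂ) (Φ₂ x) ^ 2) Ω volume := by
    simpa using key 0 2 0 2 (by norm_num)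
  constructor
  · -- first projection
    have split : ∫ x in Ω, (starRingEnd ℂ) (Φ₁ x) *
        ((‖ψ₁ * Φ₁ x + ψ₂ * Φ₂ x‖ ^ 2 : ℝ) : ℂ) * (ψ₁ * Φ₁ x + ψ₂ * Φ₂ x)
        = ∫ x in Ω, (ψ₁ ^ 2 * (starRingEnd ℂ) ψ₁ * (Φ₁ x ^ 2 * (starRingEnd ℂ) (Φ₁ x) ^ 2) + (ψ₁ ^ 2 * (starRingEnd ℂ) ψ₂ * (Φ₁ x ^ 2 * (starRingEnd ℂ) (Φ₁ x) * (starRingEnd ℂ) (Φ₂ x)) + (2 * (ψ₁ * ψ₂ * (starRingEnd ℂ) ψ₁) * (Φ₁ x * Φ₂ x * (starRingEnd ℂ) (Φ₁ x) ^ 2) + (2 * (ψ₁ * ψ₂ * (starRingEnd ℂ) ψ₂) * (Φ₁ x * Φ₂ x * (starRingEnd ℂ) (Φ₁ x) * (starRingEnd ℂ) (Φ₂ x)) + (ψ₂ ^ 2 * (starRingEnd ℂ) ψ₁ * (Φ₂ x ^ 2 * (starRingEnd ℂ) (Φ₁ x) ^ 2) + (ψ₂ ^ 2 * (starRingEnd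 ℂ) ψ₂ * (Φ₂ x ^ 2 * (starRingEnd ℂ) (Φ₁ x) * (starRingEnd ℂ) (Φ₂ x)))))))) := by
      refine setIntegral_congr_ae hΩ (Filter.Eventually.of_forall fun x _ => ?_)
      rw [habs (ψ₁ * Φ₁ x + ψ₂ * Φ₂ x)]
      simp only [map_add, map_mul]
      ring
    have J1 : IntegrableOn (fun x => ψ₁ ^ 2 * (starRingEnd ℂ) ψ₁ * (Φ₁ x ^ 2 * (starRingEnd ℂ) (Φ₁ x) ^ 2)) Ω volume :=
      int1.const_mul _
    have J2 : IntegrableOn (fun x => ψ₁ ^ 2 * (starRingEnd ℂ) ψ₂ * (Φ₁ x ^ 2 * (starRingEnd ℂ) (Φ₁ x) * (starRingEnd ℂ) (Φ₂ x))) Ω volume :=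
      int2.const_mul _
    have J3 : IntegrableOn (fun x => 2 * (ψ₁ * ψ₂ * (starRingEnd ℂ) ψ₁) * (Φ₁ x * Φ₂ x * (starRingEnd ℂ) (Φ₁ x) ^ 2)) Ω volume :=
      int3.const_mul _
    have J4 : IntegrableOn (fun x => 2 * (ψ₁ * ψ₂ * (starRingEnd ℂ) ψ₂) * (Φ₁ x * Φ₂ x * (starRingEnd ℂ) (Φ₁ x) * (starRingEnd ℂ) (Φ₂ x))) Ω volume :=
      int4.const_mul _
    have J5 : IntegrableOn (fun x => ψ₂ ^ 2 * (starRingEnd ℂ) ψ₁ * (Φ₂ x ^ 2 * (starRingEnd ℂ) (Φ₁ x) ^ 2)) Ω volume :=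
      int5.const_mul _
    have J6 : IntegrableOn (fun x => ψ₂ ^ 2 * (starRingEnd ℂ) ψ₂ * (Φ₂ x ^ 2 * (starRingEnd ℂ) (Φ₁ x) * (starRingEnd ℂ) (Φ₂ x))) Ω volume :=
      int6.const_mul _
    have e1 : ∫ x in Ω, (ψ₁ ^ 2 * (starRingEnd ℂ) ψ₁ * (Φ₁ x ^ 2 * (starRingEnd ℂ) (Φ₁ x) ^ 2) + (ψ₁ ^ 2 * (starRingEnd ℂ) ψ₂ * (Φ₁ x ^ 2 * (starRingEnd ℂ) (Φ₁ x) * (starRingEnd ℂ) (Φ₂ x)) + (2 * (ψ₁ * ψ₂ * (starRingEnd ℂ) ψ₁) * (Φ₁ x * Φ₂ x * (starRingEnd ℂ) (Φ₁ x) ^ 2) + (2 * (ψ₁ * ψ₂ * (starRingEnd ℂ) ψ₂) * (Φ₁ x * Φ₂ x * (starRingEnd ℂ) (Φ₁ x) * (starRingEnd ℂ) (Φ₂ x)) + (ψ₂ ^ 2 * (starRingEnd ℂ) ψ₁ * (Φ₂ x ^ 2 * (starRingEnd ℂ) (Φ₁ x) ^ 2) + (ψ₂ ^ 2 * (starRingEnd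 ℂ) ψ₂ * (Φ₂ x ^ 2 * (starRingEnd ℂ) (Φ₁ x) * (starRingEnd ℂ) (Φ₂ x))))))))
        = (∫ x in Ω, ψ₁ ^ 2 * (starRingEnd ℂ) ψ₁ * (Φ₁ x ^ 2 * (starRingEnd ℂ) (Φ₁ x) ^ 2)) + ∫ x in Ω, (ψ₁ ^ 2 * (starRingEnd ℂ) ψ₂ * (Φ₁ x ^ 2 * (starRingEnd ℂ) (Φ₁ x) * (starRingEnd ℂ) (Φ₂ x)) + (2 * (ψ₁ * ψ₂ * (starRingEnd ℂ) ψ₁) * (Φ₁ x * Φ₂ x * (starRingEnd ℂ) (Φ₁ x) ^ 2) + (2 * (ψ₁ * ψ₂ * (starRingEnd ℂ) ψ₂) * (Φ₁ x * Φ₂ x * (starRingEnd ℂ) (Φ₁ x) * (starRingEnd ℂ) (Φ₂ x)) + (ψ₂ ^ 2 * (starRingEnd ℂ) ψ₁ * (Φ₂ x ^ 2 * (starRingEnd ℂ) (Φ₁ x) ^ 2) + (ψ₂ ^ 2 * (starRingEnd ℂ) ψ₂ * (Φ₂ x ^ 2 * (starRingEnd ℂ) (Φ₁ x) * (starRingEnd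 ℂ) (Φ₂ x))))))) :=
      integral_add J1 (J2.add (J3.add (J4.add (J5.add (J6)))))
    have e2 : ∫ x in Ω, (ψ₁ ^ 2 * (starRingEnd ℂ) ψ₂ * (Φ₁ x ^ 2 * (starRingEnd ℂ) (Φ₁ x) * (starRingEnd ℂ) (Φ₂ x)) + (2 * (ψ₁ * ψ₂ * (starRingEnd ℂ) ψ₁) * (Φ₁ x * Φ₂ x * (starRingEnd ℂ) (Φ₁ x) ^ 2) + (2 * (ψ₁ * ψ₂ * (starRingEnd ℂ) ψ₂) * (Φ₁ x * Φ₂ x * (starRingEnd ℂ) (Φ₁ x) * (starRingEnd ℂ) (Φ₂ x)) + (ψ₂ ^ 2 * (starRingEnd ℂ) ψ₁ * (Φ₂ x ^ 2 * (starRingEnd ℂ) (Φ₁ x) ^ 2) + (ψ₂ ^ 2 * (starRingEnd ℂ) ψ₂ * (Φ₂ x ^ 2 * (starRingEnd ℂ) (Φ₁ x) * (starRingEnd ℂ) (Φ₂ x)))))))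
        = (∫ x in Ω, ψ₁ ^ 2 * (starRingEnd ℂ) ψ₂ * (Φ₁ x ^ 2 * (starRingEnd ℂ) (Φ₁ x) * (starRingEnd ℂ) (Φ₂ x))) + ∫ x in Ω, (2 * (ψ₁ * ψ₂ * (starRingEnd ℂ) ψ₁) * (Φ₁ x * Φ₂ x * (starRingEnd ℂ) (Φ₁ x) ^ 2) + (2 * (ψ₁ * ψ₂ * (starRingEnd ℂ) ψ₂) * (Φ₁ x * Φ₂ x * (starRingEnd ℂ) (Φ₁ x) * (starRingEnd ℂ) (Φ₂ x)) + (ψ₂ ^ 2 * (starRingEnd ℂ) ψ₁ * (Φ₂ x ^ 2 * (starRingEnd ℂ) (Φ₁ x) ^ 2) + (ψ₂ ^ 2 * (starRingEnd ℂ) ψ₂ * (Φ₂ x ^ 2 * (starRingEnd ℂ) (Φ₁ x) * (starRingEnd ℂ) (Φ₂ x)))))) :=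
      integral_add J2 (J3.add (J4.add (J5.add (J6))))
    have e3 : ∫ x in Ω, (2 * (ψ₁ * ψ₂ * (starRingEnd ℂ) ψ₁) * (Φ₁ x * Φ₂ x * (starRingEnd ℂ) (Φ₁ x) ^ 2) + (2 * (ψ₁ * ψ₂ * (starRingEnd ℂ) ψ₂) * (Φ₁ x * Φ₂ x * (starRingEnd ℂ) (Φ₁ x) * (starRingEnd ℂ) (Φ₂ x)) + (ψ₂ ^ 2 * (starRingEnd ℂ) ψ₁ * (Φ₂ x ^ 2 * (starRingEnd ℂ) (Φ₁ x) ^ 2) + (ψ₂ ^ 2 * (starRingEnd ℂ) ψ₂ * (Φ₂ x ^ 2 * (starRingEnd ℂ) (Φ₁ x) * (starRingEnd ℂ) (Φ₂ x))))))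
        = (∫ x in Ω, 2 * (ψ₁ * ψ₂ * (starRingEnd ℂ) ψ₁) * (Φ₁ x * Φ₂ x * (starRingEnd ℂ) (Φ₁ x) ^ 2)) + ∫ x in Ω, (2 * (ψ₁ * ψ₂ * (starRingEnd ℂ) ψ₂) * (Φ₁ x * Φ₂ x * (starRingEnd ℂ) (Φ₁ x) * (starRingEnd ℂ) (Φ₂ x)) + (ψ₂ ^ 2 * (starRingEnd ℂ) ψ₁ * (Φ₂ x ^ 2 * (starRingEnd ℂ) (Φ₁ x) ^ 2) + (ψ₂ ^ 2 * (starRingEnd ℂ) ψ₂ * (Φ₂ x ^ 2 * (starRingEnd ℂ) (Φ₁ x) * (starRingEnd ℂ) (Φ₂ x))))) :=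
      integral_add J3 (J4.add (J5.add (J6)))
    have e4 : ∫ x in Ω, (2 * (ψ₁ * ψ₂ * (starRingEnd ℂ) ψ₂) * (Φ₁ x * Φ₂ x * (starRingEnd ℂ) (Φ₁ x) * (starRingEnd ℂ) (Φ₂ x)) + (ψ₂ ^ 2 * (starRingEnd ℂ) ψ₁ * (Φ₂ x ^ 2 * (starRingEnd ℂ) (Φ₁ x) ^ 2) + (ψ₂ ^ 2 * (starRingEnd ℂ) ψ₂ * (Φ₂ x ^ 2 * (starRingEnd ℂ) (Φ₁ x) * (starRingEnd ℂ) (Φ₂ x)))))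
        = (∫ x in Ω, 2 * (ψ₁ * ψ₂ * (starRingEnd ℂ) ψ₂) * (Φ₁ x * Φ₂ x * (starRingEnd ℂ) (Φ₁ x) * (starRingEnd ℂ) (Φ₂ x))) + ∫ x in Ω, (ψ₂ ^ 2 * (starRingEnd ℂ) ψ₁ * (Φ₂ x ^ 2 * (starRingEnd ℂ) (Φ₁ x) ^ 2) + (ψ₂ ^ 2 * (starRingEnd ℂ) ψ₂ * (Φ₂ x ^ 2 * (starRingEnd ℂ) (Φ₁ x) * (starRingEnd ℂ) (Φ₂ x)))) :=
      integral_add J4 (J5.add (J6))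
    have e5 : ∫ x in Ω, (ψ₂ ^ 2 * (starRingEnd ℂ) ψ₁ * (Φ₂ x ^ 2 * (starRingEnd ℂ) (Φ₁ x) ^ 2) + (ψ₂ ^ 2 * (starRingEnd ℂ) ψ₂ * (Φ₂ x ^ 2 * (starRingEnd ℂ) (Φ₁ x) * (starRingEnd ℂ) (Φ₂ x))))
        = (∫ x in Ω, ψ₂ ^ 2 * (starRingEnd ℂ) ψ₁ * (Φ₂ x ^ 2 * (starRingEnd ℂ) (Φ₁ x) ^ 2)) + ∫ x in Ω, (ψ₂ ^ 2 * (starRingEnd ℂ) ψ₂ * (Φ₂ x ^ 2 * (starRingEnd ℂ) (Φ₁ x) * (starRingEnd ℂ) (Φ₂ x))) :=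
      integral_add J5 (J6)
    have c1 : ∫ x in Ω, ψ₁ ^ 2 * (starRingEnd ℂ) ψ₁ * (Φ₁ x ^ 2 * (starRingEnd ℂ) (Φ₁ x) ^ 2) = (ψ₁ ^ 2 * (starRingEnd ℂ) ψ₁) * ∫ x in Ω, Φ₁ x ^ 2 * (starRingEnd ℂ) (Φ₁ x) ^ 2 :=
      integral_const_mul _ _
    have c2 : ∫ x in Ω, ψ₁ ^ 2 * (starRingEnd ℂ) ψ₂ * (Φ₁ x ^ 2 * (starRingEnd ℂ) (Φ₁ x) * (starRingEnd ℂ) (Φ₂ x)) = (ψ₁ ^ 2 * (starRingEnd ℂ) ψ₂) * ∫ x in Ω, Φ₁ x ^ 2 * (starRingEnd ℂ) (Φ₁ x) * (starRingEnd ℂ) (Φ₂ x) :=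
      integral_const_mul _ _
    have c3 : ∫ x in Ω, 2 * (ψ₁ * ψ₂ * (starRingEnd ℂ) ψ₁) * (Φ₁ x * Φ₂ x * (starRingEnd ℂ) (Φ₁ x) ^ 2) = (2 * (ψ₁ * ψ₂ * (starRingEnd ℂ) ψ₁)) * ∫ x in Ω, Φ₁ x * Φ₂ x * (starRingEnd ℂ) (Φ₁ x) ^ 2 :=
      integral_const_mul _ _
    have c4 : ∫ x in Ω, 2 * (ψ₁ * ψ₂ * (starRingEnd ℂ) ψ₂) * (Φ₁ x * Φ₂ x * (starRingEnd ℂ) (Φ₁ x) * (starRingEnd ℂ) (Φ₂ x)) = (2 * (ψ₁ * ψ₂ * (starRingEnd ℂ) ψ₂)) * ∫ x in Ω, Φ₁ x * Φ₂ x * (starRingEnd ℂ) (Φ₁ x) * (starRingEnd ℂ) (Φ₂ x) :=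
      integral_const_mul _ _
    have c5 : ∫ x in Ω, ψ₂ ^ 2 * (starRingEnd ℂ) ψ₁ * (Φ₂ x ^ 2 * (starRingEnd ℂ) (Φ₁ x) ^ 2) = (ψ₂ ^ 2 * (starRingEnd ℂ) ψ₁) * ∫ x in Ω, Φ₂ x ^ 2 * (starRingEnd ℂ) (Φ₁ x) ^ 2 :=
      integral_const_mul _ _
    have c6 : ∫ x in Ω, ψ₂ ^ 2 * (starRingEnd ℂ) ψ₂ * (Φ₂ x ^ 2 * (starRingEnd ℂ) (Φ₁ x) * (starRingEnd ℂ) (Φ₂ x)) = (ψ₂ ^ 2 * (starRingEnd ℂ) ψ₂) * ∫ x in Ω, Φ₂ x ^ 2 * (starRingEnd ℂ) (Φ₁ x) * (starRingEnd ℂ) (Φ₂ x) :=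
      integral_const_mul _ _
    rw [split, e1, e2, e3, e4, e5, c1, c2, c3, c4, c5, c6, hN1, hN2, hV1, hV2, hV3, hV4]
    push_cast
    linear_combination (-((β₁ : ℂ) * ψ₁)) * habs' ψ₁ + (-(2 * (β₂ : ℂ) * ψ₁)) * habs' ψ₂
  · -- second projection
    have split : ∫ x in Ω, (starRingEnd ℂ) (Φ₂ x) *
        ((‖ψ₁ * Φ₁ x + ψ₂ * Φ₂ x‖ ^ 2 : ℝ) : ℂ) * (ψ₁ * Φ₁ x + ψ₂ * Φ₂ x)
        = ∫ x in Ω, (ψ₁ ^ 2 * (starRingEnd ℂ) ψ₁ * (Φ₁ x ^ 2 * (starRingEnd ℂ) (Φ₁ x) * (starRingEnd ℂ) (Φ₂ x)) + (ψ₁ ^ 2 * (starRingEnd ℂ) ψ₂ * (Φ₁ x ^ 2 * (starRingEnd ℂ) (Φ₂ x) ^ 2) + (2 * (ψ₁ * ψ₂ * (starRingEnd ℂ) ψ₁) * (Φ₁ x * Φ₂ x * (starRingEnd ℂ) (Φ₁ x) * (starRingEnd ℂ) (Φ₂ x)) + (2 * (ψ₁ * ψ₂ * (starRingEnd ℂ)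 ψ₂) * (Φ₁ x * Φ₂ x * (starRingEnd ℂ) (Φ₂ x) ^ 2) + (ψ₂ ^ 2 * (starRingEnd ℂ) ψ₁ * (Φ₂ x ^ 2 * (starRingEnd ℂ) (Φ₁ x) * (starRingEnd ℂ) (Φ₂ x)) + (ψ₂ ^ 2 * (starRingEnd ℂ) ψ₂ * (Φ₂ x ^ 2 * (starRingEnd ℂ) (Φ₂ x) ^ 2))))))) := by
      refine setIntegral_congr_ae hΩ (Filter.Eventually.of_forall fun x _ => ?_)
      rw [habs (ψ₁ * Φ₁ x + ψ₂ * Φ₂ x)]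
      simp only [map_add, map_mul]
      ring
    have J1 : IntegrableOn (fun x => ψ₁ ^ 2 * (starRingEnd ℂ) ψ₁ * (Φ₁ x ^ 2 * (starRingEnd ℂ) (Φ₁ x) * (starRingEnd ℂ) (Φ₂ x))) Ω volume :=
      int2.const_mul _
    have J2 : IntegrableOn (fun x => ψ₁ ^ 2 * (starRingEnd ℂ) ψ₂ * (Φ₁ x ^ 2 * (starRingEnd ℂ) (Φ₂ x) ^ 2)) Ω volume :=
      int7.const_mul _
    have J3 : IntegrableOn (fun x => 2 * (ψ₁ * ψ₂ * (starRingEnd ℂ) ψ₁) * (Φ₁ x * Φ₂ x * (starRingEnd ℂ) (Φ₁ x) * (starRingEnd ℂ) (Φ₂ x))) Ω volume :=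
      int4.const_mul _
    have J4 : IntegrableOn (fun x => 2 * (ψ₁ * ψ₂ * (starRingEnd ℂ) ψ₂) * (Φ₁ x * Φ₂ x * (starRingEnd ℂ) (Φ₂ x) ^ 2)) Ω volume :=
      int8.const_mul _
    have J5 : IntegrableOn (fun x => ψ₂ ^ 2 * (starRingEnd ℂ) ψ₁ * (Φ₂ x ^ 2 * (starRingEnd ℂ) (Φ₁ x) * (starRingEnd ℂ) (Φ₂ x))) Ω volume :=
      int6.const_mul _
    have J6 : IntegrableOn (fun x => ψ₂ ^ 2 * (starRingEnd ℂ) ψ₂ * (Φ₂ x ^ 2 * (starRingEnd ℂ) (Φ₂ x) ^ 2)) Ω volume :=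
      int9.const_mul _
    have e1 : ∫ x in Ω, (ψ₁ ^ 2 * (starRingEnd ℂ) ψ₁ * (Φ₁ x ^ 2 * (starRingEnd ℂ) (Φ₁ x) * (starRingEnd ℂ) (Φ₂ x)) + (ψ₁ ^ 2 * (starRingEnd ℂ) ψ₂ * (Φ₁ x ^ 2 * (starRingEnd ℂ) (Φ₂ x) ^ 2) + (2 * (ψ₁ * ψ₂ * (starRingEnd ℂ) ψ₁) * (Φ₁ x * Φ₂ x * (starRingEnd ℂ) (Φ₁ x) * (starRingEnd ℂ) (Φ₂ x)) + (2 * (ψ₁ * ψ₂ * (starRingEnd ℂ) ψ₂) * (Φ₁ x * Φ₂ x * (starRingEnd ℂ) (Φ₂ x) ^ 2) + (ψ₂ ^ 2 * (starRingEnd ℂ) ψ₁ * (Φ₂ x ^ 2 * (starRingEnd ℂ) (Φ₁ x) * (starRingEnd ℂ) (Φ₂ x)) + (ψ₂ ^ 2 * (starRingEnd ℂ) ψ₂ * (Φ₂ x ^ 2 * (starRingEnd ℂ) (Φ₂ x) ^ 2)))))))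
        = (∫ x in Ω, ψ₁ ^ 2 * (starRingEnd ℂ) ψ₁ * (Φ₁ x ^ 2 * (starRingEnd ℂ) (Φ₁ x) * (starRingEnd ℂ) (Φ₂ x))) + ∫ x in Ω, (ψ₁ ^ 2 * (starRingEnd ℂ) ψ₂ * (Φ₁ x ^ 2 * (starRingEnd ℂ) (Φ₂ x) ^ 2) + (2 * (ψ₁ * ψ₂ * (starRingEnd ℂ) ψ₁) * (Φ₁ x * Φ₂ x * (starRingEnd ℂ) (Φ₁ x) * (starRingEnd ℂ) (Φ₂ x)) + (2 * (ψ₁ * ψ₂ * (starRingEnd ℂ) ψ₂) * (Φ₁ x * Φ₂ x * (starRingEnd ℂ) (Φ₂ x) ^ 2) + (ψ₂ ^ 2 * (starRingEnd ℂ) ψ₁ * (Φ₂ x ^ 2 * (starRingEnd ℂ) (Φ₁ x) * (starRingEnd ℂ) (Φ₂ x)) + (ψ₂ ^ 2 * (starRingEnd ℂ) ψ₂ * (Φ₂ x ^ 2 * (starRingEnd ℂ) (Φ₂ x) ^ 2)))))) :=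
      integral_add J1 (J2.add (J3.add (J4.add (J5.add (J6)))))
    have e2 : ∫ x in Ω, (ψ₁ ^ 2 * (starRingEnd ℂ) ψ₂ * (Φ₁ x ^ 2 * (starRingEnd ℂ) (Φ₂ x) ^ 2) + (2 * (ψ₁ * ψ₂ * (starRingEnd ℂ) ψ₁) * (Φ₁ x * Φ₂ x * (starRingEnd ℂ) (Φ₁ x) * (starRingEnd ℂ) (Φ₂ x)) + (2 * (ψ₁ * ψ₂ * (starRingEnd ℂ) ψ₂) * (Φ₁ x * Φ₂ x * (starRingEnd ℂ) (Φ₂ x) ^ 2) + (ψ₂ ^ 2 * (starRingEnd ℂ) ψ₁ * (Φ₂ x ^ 2 * (starRingEnd ℂ) (Φ₁ x) * (starRingEnd ℂ) (Φ₂ x)) + (ψ₂ ^ 2 * (starRingEnd ℂ) ψ₂ * (Φ₂ x ^ 2 * (starRingEnd ℂ) (Φ₂ x) ^ 2))))))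
        = (∫ x in Ω, ψ₁ ^ 2 * (starRingEnd ℂ) ψ₂ * (Φ₁ x ^ 2 * (starRingEnd ℂ) (Φ₂ x) ^ 2)) + ∫ x in Ω, (2 * (ψ₁ * ψ₂ * (starRingEnd ℂ) ψ₁) * (Φ₁ x * Φ₂ x * (starRingEnd ℂ) (Φ₁ x) * (starRingEnd ℂ) (Φ₂ x)) + (2 * (ψ₁ * ψ₂ * (starRingEnd ℂ) ψ₂) * (Φ₁ x * Φ₂ x * (starRingEnd ℂ) (Φ₂ x) ^ 2) + (ψ₂ ^ 2 * (starRingEnd ℂ) ψ₁ * (Φ₂ x ^ 2 * (starRingEnd ℂ) (Φ₁ x) * (starRingEnd ℂ) (Φ₂ x)) + (ψ₂ ^ 2 * (starRingEnd ℂ) ψ₂ * (Φ₂ x ^ 2 * (starRingEnd ℂ) (Φ₂ x) ^ 2))))) :=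
      integral_add J2 (J3.add (J4.add (J5.add (J6))))
    have e3 : ∫ x in Ω, (2 * (ψ₁ * ψ₂ * (starRingEnd ℂ) ψ₁) * (Φ₁ x * Φ₂ x * (starRingEnd ℂ) (Φ₁ x) * (starRingEnd ℂ) (Φ₂ x)) + (2 * (ψ₁ * ψ₂ * (starRingEnd ℂ) ψ₂) * (Φ₁ x * Φ₂ x * (starRingEnd ℂ) (Φ₂ x) ^ 2) + (ψ₂ ^ 2 * (starRingEnd ℂ) ψ₁ * (Φ₂ x ^ 2 * (starRingEnd ℂ) (Φ₁ x) * (starRingEnd ℂ) (Φ₂ x)) + (ψ₂ ^ 2 * (starRingEnd ℂ) ψ₂ * (Φ₂ x ^ 2 * (starRingEnd ℂ) (Φ₂ x) ^ 2)))))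
        = (∫ x in Ω, 2 * (ψ₁ * ψ₂ * (starRingEnd ℂ) ψ₁) * (Φ₁ x * Φ₂ x * (starRingEnd ℂ) (Φ₁ x) * (starRingEnd ℂ) (Φ₂ x))) + ∫ x in Ω, (2 * (ψ₁ * ψ₂ * (starRingEnd ℂ) ψ₂) * (Φ₁ x * Φ₂ x * (starRingEnd ℂ) (Φ₂ x) ^ 2) + (ψ₂ ^ 2 * (starRingEnd ℂ) ψ₁ * (Φ₂ x ^ 2 * (starRingEnd ℂ) (Φ₁ x) * (starRingEnd ℂ) (Φ₂ x)) + (ψ₂ ^ 2 * (starRingEnd ℂ) ψ₂ * (Φ₂ x ^ 2 * (starRingEnd ℂ) (Φ₂ x) ^ 2)))) :=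
      integral_add J3 (J4.add (J5.add (J6)))
    have e4 : ∫ x in Ω, (2 * (ψ₁ * ψ₂ * (starRingEnd ℂ) ψ₂) * (Φ₁ x * Φ₂ x * (starRingEnd ℂ) (Φ₂ x) ^ 2) + (ψ₂ ^ 2 * (starRingEnd ℂ) ψ₁ * (Φ₂ x ^ 2 * (starRingEnd ℂ) (Φ₁ x) * (starRingEnd ℂ) (Φ₂ x)) + (ψ₂ ^ 2 * (starRingEnd ℂ) ψ₂ * (Φ₂ x ^ 2 * (starRingEnd ℂ) (Φ₂ x) ^ 2))))
        = (∫ x in Ω, 2 * (ψ₁ * ψ₂ * (starRingEnd ℂ) ψ₂) * (Φ₁ x * Φ₂ x * (starRingEnd ℂ) (Φ₂ x) ^ 2)) + ∫ x in Ω, (ψ₂ ^ 2 * (starRingEnd ℂ) ψ₁ * (Φ₂ x ^ 2 * (starRingEnd ℂ) (Φ₁ x) * (starRingEnd ℂ) (Φ₂ x)) + (ψ₂ ^ 2 * (starRingEnd ℂ) ψ₂ * (Φ₂ x ^ 2 * (starRingEnd ℂ) (Φ₂ x) ^ 2))) :=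
      integral_add J4 (J5.add (J6))
    have e5 : ∫ x in Ω, (ψ₂ ^ 2 * (starRingEnd ℂ) ψ₁ * (Φ₂ x ^ 2 * (starRingEnd ℂ) (Φ₁ x) * (starRingEnd ℂ) (Φ₂ x)) + (ψ₂ ^ 2 * (starRingEnd ℂ) ψ₂ * (Φ₂ x ^ 2 * (starRingEnd ℂ) (Φ₂ x) ^ 2)))
        = (∫ x in Ω, ψ₂ ^ 2 * (starRingEnd ℂ) ψ₁ * (Φ₂ x ^ 2 * (starRingEnd ℂ) (Φ₁ x) * (starRingEnd ℂ) (Φ₂ x))) + ∫ x in Ω, (ψ₂ ^ 2 * (starRingEnd ℂ) ψ₂ * (Φ₂ x ^ 2 * (starRingEnd ℂ) (Φ₂ x) ^ 2)) :=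
      integral_add J5 (J6)
    have c1 : ∫ x in Ω, ψ₁ ^ 2 * (starRingEnd ℂ) ψ₁ * (Φ₁ x ^ 2 * (starRingEnd ℂ) (Φ₁ x) * (starRingEnd ℂ) (Φ₂ x)) = (ψ₁ ^ 2 * (starRingEnd ℂ) ψ₁) * ∫ x in Ω, Φ₁ x ^ 2 * (starRingEnd ℂ) (Φ₁ x) * (starRingEnd ℂ) (Φ₂ x) :=
      integral_const_mul _ _
    have c2 : ∫ x in Ω, ψ₁ ^ 2 * (starRingEnd ℂ) ψ₂ * (Φ₁ x ^ 2 * (starRingEnd ℂ) (Φ₂ x) ^ 2) = (ψ₁ ^ 2 * (starRingEnd ℂ) ψ₂) * ∫ x in Ω, Φ₁ x ^ 2 * (starRingEnd ℂ) (Φ₂ x) ^ 2 :=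
      integral_const_mul _ _
    have c3 : ∫ x in Ω, 2 * (ψ₁ * ψ₂ * (starRingEnd ℂ) ψ₁) * (Φ₁ x * Φ₂ x * (starRingEnd ℂ) (Φ₁ x) * (starRingEnd ℂ) (Φ₂ x)) = (2 * (ψ₁ * ψ₂ * (starRingEnd ℂ) ψ₁)) * ∫ x in Ω, Φ₁ x * Φ₂ x * (starRingEnd ℂ) (Φ₁ x) * (starRingEnd ℂ) (Φ₂ x) :=
      integral_const_mul _ _
    have c4 : ∫ x in Ω, 2 * (ψ₁ * ψ₂ * (starRingEnd ℂ) ψ₂) * (Φ₁ x * Φ₂ x * (starRingEnd ℂ) (Φ₂ x) ^ 2) = (2 * (ψ₁ * ψ₂ * (starRingEnd ℂ) ψ₂)) * ∫ x in Ω, Φ₁ x * Φ₂ x * (starRingEnd ℂ) (Φ₂ x) ^ 2 :=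
      integral_const_mul _ _
    have c5 : ∫ x in Ω, ψ₂ ^ 2 * (starRingEnd ℂ) ψ₁ * (Φ₂ x ^ 2 * (starRingEnd ℂ) (Φ₁ x) * (starRingEnd ℂ) (Φ₂ x)) = (ψ₂ ^ 2 * (starRingEnd ℂ) ψ₁) * ∫ x in Ω, Φ₂ x ^ 2 * (starRingEnd ℂ) (Φ₁ x) * (starRingEnd ℂ) (Φ₂ x) :=
      integral_const_mul _ _
    have c6 : ∫ x in Ω, ψ₂ ^ 2 * (starRingEnd ℂ) ψ₂ * (Φ₂ x ^ 2 * (starRingEnd ℂ) (Φ₂ x) ^ 2) = (ψ₂ ^ 2 * (starRingEnd ℂ) ψ₂) * ∫ x in Ω, Φ₂ x ^ 2 * (starRingEnd ℂ) (Φ₂ x) ^ 2 :=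
      integral_const_mul _ _
    rw [split, e1, e2, e3, e4, e5, c1, c2, c3, c4, c5, c6, hN2, hN3, hV1, hV4, hV5, hV6]
    push_cast
    linear_combination (-(2 * (β₂ : ℂ) * ψ₂)) * habs' ψ₁ + (-((β₁ : ℂ) * ψ₂)) * habs' ψ₂
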